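/- Let z₁, z₂, z₃ be pairwise distinct complex numbers. There exist a, b ∈ ℂ such that the affine map f(z) = a·z + b cyclically permutes the three points (f(z₁) = z₂, f(z₂) = z₃, f(z₃) = z₁) if and only if j(z₁, z₂, z₃) = 0; i.e., the set {z₁,z₂,z₃} has a nontrivial symmetry of order 3 exactly when its j-invariant vanishes. -/

import Mathlib

open Complex

/-- The j-invariant as a function of the cross-ratio. -/
noncomputable def Jfun (l : ℂ) : ℂ := 4 * (l ^ 2 - l + 1) ^ 3 / (27 * l ^ 2 * (l - 1) ^ 2)

/-- The cross-ratio of four points of `ℂ`. -/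
noncomputable def crossRatio (z1 z2 z3 z4 : ℂ) : ℂ :=
  ((z1 - z3) / (z2 - z3)) * ((z2 - z4) / (z1 - z4))

/-- The j-invariant of a quadruple of points of `ℂ`. -/
noncomputable def jInv4 (z1 z2 z3 z4 : ℂ) : ℂ := Jfun (crossRatio z1 z2 z3 z4)

/-- The j-invariant of a triple of points of `ℂ` (fourth point at infinity). -/
noncomputable def jInv3 (z1 z2 z3 : ℂ) : ℂ := Jfun ((z1 - z3) / (z2 - z3))

theorem order_three_symmetry_iff_jInv3_eq_zero (z1 z2 z3 : ℂ)
    (h12 : z1 ≠ z2) (h13 : z1 ≠ z3) (h23 : z2 ≠ z3) :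
    (∃ a b : ℂ, a * z1 + b = z2 ∧ a * z2 + b = z3 ∧ a * z3 + b = z1) ↔
      jInv3 z1 z2 z3 = 0 := by
  have hd : z2 - z3 ≠ 0 := sub_ne_zero.mpr h23
  have hd12 : z1 - z2 ≠ 0 := sub_ne_zero.mpr h12
  have hd13 : z1 - z3 ≠ 0 := sub_ne_zero.mpr h13
  constructor
  · rintro ⟨a, b, h1, h2, h3⟩
    have e1 : a * (z1 - z2) = z2 - z3 := by linear_combination h1 - h2
    have e2 : a * (z2 - z3) = z3 - z1 := by linear_combination h2 - h3
    have hQ : (z2 - z3) ^ 2 = (z1 - z2) * (z3 - z1) := by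
      linear_combination (z1 - z2) * e2 - (z2 - z3) * e1
    unfold jInv3 Jfun
    apply div_eq_zero_iff.mpr
    left
    have hnum : ((z1 - z3) / (z2 - z3)) ^ 2 - (z1 - z3) / (z2 - z3) + 1 = 0 := by
      field_simp
      linear_combination hQ
    rw [hnum]
    ring
  · intro hj
    unfold jInv3 Jfun at hj
    set l : ℂ := (z1 - z3) / (z2 - z3) with hl
    have hl0 : l ≠ 0 := div_ne_zero hd13 hd
    have hl1 : l - 1 ≠ 0 := by
      rw [hl]
      rw [div_sub_one hd]
      exact div_ne_zero (by intro h; apply hd12; linear_combination h) hd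
    have hden : (27 : ℂ) * l ^ 2 * (l - 1) ^ 2 ≠ 0 := by
      apply mul_ne_zero (mul_ne_zero (by norm_num) (pow_ne_zero _ hl0)) (pow_ne_zero _ hl1)
    rcases div_eq_zero_iff.mp hj with hnum | h
    · have h3 : l ^ 2 - l + 1 = 0 := by
        rcases mul_eq_zero.mp hnum with h | h
        · norm_num at h
        · exact pow_eq_zero_iff (by norm_num) |>.mp h
      have hQ : (z2 - z3) ^ 2 = (z1 - z2) * (z3 - z1) := by
        rw [hl] at h3
        field_simp at h3
        have h4 : (z2 - z3) * ((z2 - z3) ^ 2 - (z1 - z2) * (z3 - z1)) = 0 := by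
          linear_combination (z2 - z3) * h3
        rcases mul_eq_zero.mp h4 with h | h
        · exact absurd h hd
        · linear_combination h
      refine ⟨(z2 - z3) / (z1 - z2), z2 - (z2 - z3) / (z1 - z2) * z1, by ring, ?_, ?_⟩
      · field_simp
        ring
      · field_simp
        linear_combination -hQ
    · exact absurd h hden
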